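/- arXiv:2212.01690 — 2 statements merged into one kernel-verified Lean document; each statement's English description precedes it below -/
import Mathlib

section
/- Under the assumptions that (ε_n) is i.i.d. in L^p_B with mean zero, (ρ_n) is i.i.d. in L(B) independent of (ε_n), and E‖ρ_0‖_L^p < 1 (p ≥ 1), the process X_n = μ + Σ_{j=0}^∞ A_{n,j} ε_{n-j} satisfies the recursion X_n − μ = ρ_n(X_{n-1} − μ) + ε_n for all n ∈ ℤ. -/
open MeasureTheory Filter Topology ProbabilityTheory
open scoped ENNReal NNReal
noncomputable section

/-- An i.i.d. sequence indexed by `ℤ`. -/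
def IIDZ {Ω : Type*} [MeasurableSpace Ω] {E : Type*} [MeasurableSpace E]
    (X : ℤ → Ω → E) (μ : Measure Ω) : Prop :=
  iIndepFun X μ ∧ ∀ n, IdentDistrib (X n) (X 0) μ μ

/-- Strict stationarity of a `ℤ`-indexed process: the law of the whole path is
shift invariant. -/
def StrictlyStationary {Ω : Type*} [MeasurableSpace Ω] {E : Type*} [MeasurableSpace E]
    (X : ℤ → Ω → E) (μ : Measure Ω) : Prop :=
  ∀ k : ℤ, IdentDistrib (fun ω (n : ℤ) => X n ω) (fun ω (n : ℤ) => X (n + k) ω) μ μ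

/-- `prodOp ρ n j = ρ_n ∘ ⋯ ∘ ρ_{n-j+1}` (random products of operators), with
`prodOp ρ n 0 = I`. -/
def prodOp {Ω : Type*} {B : Type*} [NormedAddCommGroup B] [NormedSpace ℝ B]
    (ρ : ℤ → Ω → B →L[ℝ] B) : ℤ → ℕ → Ω → B →L[ℝ] B
  | _, 0, _ => ContinuousLinearMap.id ℝ B
  | n, (j+1), ω => (ρ n ω).comp (prodOp ρ (n-1) j ω)

/-- The (cross-)covariance operator `C_{X,Y}(x*) = E (x*(X) • Y)`, as a map from the
dual of `B` to `B`. -/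
def covFn {Ω : Type*} [MeasurableSpace Ω] {B : Type*} [NormedAddCommGroup B]
    [NormedSpace ℝ B] [CompleteSpace B] (μ : Measure Ω) (X Y : Ω → B) :
    (B →L[ℝ] ℝ) → B :=
  fun f => ∫ ω, f (X ω) • Y ω ∂μ

/-- The nuclear norm of a map `T : B* → B`: the infimum of `∑ ‖x_j**‖ ‖y_j‖` over all
nuclear representations `T x* = ∑ x_j**(x*) • y_j`. -/
def nuclearNorm {B : Type*} [NormedAddCommGroup B] [NormedSpace ℝ B]
    (T : (B →L[ℝ] ℝ) → B) : ℝ :=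
  sInf { c | ∃ (g : ℕ → ((B →L[ℝ] ℝ) →L[ℝ] ℝ)) (y : ℕ → B),
    Summable (fun j => ‖g j‖ * ‖y j‖) ∧ c = ∑' j, ‖g j‖ * ‖y j‖ ∧
    ∀ f, T f = ∑' j, g j f • y j }

/-- `B` is `r`-smooth: there is an equivalent norm `N` such that
`sup_{t>0} t^{-r} sup { N(x+ty) + N(x-ty) - 2 : N x = N y = 1 } < ∞`. -/
def RSmooth (B : Type*) [NormedAddCommGroup B] [NormedSpace ℝ B] (r : ℝ) : Prop :=
  ∃ N : B → ℝ, (∀ x y : B, N (x + y) ≤ N x + N y) ∧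
    (∀ (a : ℝ) (x : B), N (a • x) = |a| * N x) ∧
    (∃ c C : ℝ, 0 < c ∧ ∀ x : B, c * ‖x‖ ≤ N x ∧ N x ≤ C * ‖x‖) ∧
    ∃ K : ℝ, ∀ t : ℝ, 0 < t → ∀ x y : B, N x = 1 → N y = 1 →
      N (x + t • y) + N (x - t • y) - 2 ≤ K * t ^ r

variable {Ω : Type*} [MeasurableSpace Ω]
  {B : Type*} [NormedAddCommGroup B] [NormedSpace ℝ B] [CompleteSpace B]
  [TopologicalSpace.SeparableSpace B] [MeasurableSpace B] [BorelSpace B]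
  [MeasurableSpace (B →L[ℝ] B)] [BorelSpace (B →L[ℝ] B)]


private lemma prodOp_norm_le (ρ : ℤ → Ω → B →L[ℝ] B) :
    ∀ (j : ℕ) (m : ℤ) (ω : Ω) (x : B),
    ‖prodOp ρ m j ω x‖ ≤ (∏ i ∈ Finset.range j, ‖ρ (m - i) ω‖) * ‖x‖ := by
  intro j
  induction j with
  | zero => intro m ω x; simp [prodOp]
  | succ j ih =>
    intro m ω x
    have hprod : (∏ i ∈ Finset.range (j+1), ‖ρ (m - i) ω‖)
        = ‖ρ m ω‖ * ∏ i ∈ Finset.range j, ‖ρ (m - 1 - i) ω‖ := by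
      rw [Finset.prod_range_succ']
      simp only [Nat.cast_zero, sub_zero]
      rw [mul_comm]
      congr 1
      refine Finset.prod_congr rfl fun i _ => ?_
      have hcast : m - ((i+1 : ℕ):ℤ) = m - 1 - i := by push_cast; ring
      rw [hcast]
    have h1 : prodOp ρ m (j+1) ω x = ρ m ω (prodOp ρ (m-1) j ω x) := rfl
    rw [h1, hprod, mul_assoc]
    calc ‖ρ m ω (prodOp ρ (m-1) j ω x)‖
        ≤ ‖ρ m ω‖ * ‖prodOp ρ (m-1) j ω x‖ := (ρ m ω).le_opNorm _
      _ ≤ ‖ρ m ω‖ * ((∏ i ∈ Finset.range j, ‖ρ (m - 1 - i) ω‖) * ‖x‖) :=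
          mul_le_mul_of_nonneg_left (ih (m-1) ω x) (norm_nonneg _)

private lemma lintegral_finset_prod_of_iIndep {μ : Measure Ω} [IsProbabilityMeasure μ]
    {g : ℤ → Ω → ℝ≥0∞}
    (hind : iIndepFun g μ) (hmeas : ∀ k, Measurable (g k))
    (s : Finset ℤ) :
    ∫⁻ ω, ∏ k ∈ s, g k ω ∂μ = ∏ k ∈ s, ∫⁻ ω, g k ω ∂μ := by
  classical
  induction s using Finset.induction_on with
  | empty => simp
  | @insert a s ha ih =>
    have hF : Measurable fun ω => ∏ k ∈ s, g k ω :=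
      Finset.measurable_prod _ fun k _ => hmeas k
    have hip : IndepFun (fun ω => ∏ k ∈ s, g k ω) (g a) μ := by
      have h := hind.indepFun_finsetProd_of_notMem hmeas ha
      have heq : (∏ j ∈ s, g j) = fun ω => ∏ k ∈ s, g k ω :=
        funext fun ω => Finset.prod_apply ω s g
      rwa [heq] at h
    have hmul := lintegral_mul_eq_lintegral_mul_lintegral_of_indepFun hF (hmeas a) hip
    rw [Finset.prod_insert ha, ← ih, mul_comm, ← hmul]
    refine lintegral_congr fun ω => ?_
    simp [Finset.prod_insert ha, mul_comm]

private lemma brca_aux_summable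
    (μ : Measure Ω) [IsProbabilityMeasure μ]
    (ρ : ℤ → Ω → B →L[ℝ] B) (ε : ℤ → Ω → B)
    (hρmeas : ∀ n, Measurable (ρ n)) (hεmeas : ∀ n, Measurable (ε n))
    (hρiid : IIDZ ρ μ) (hεiid : IIDZ ε μ)
    (hindep : IndepFun (fun ω (n : ℤ) => ρ n ω) (fun ω (n : ℤ) => ε n ω) μ)
    (p : ℝ) (hp : 1 ≤ p)
    (hεp : Integrable (fun ω => ‖ε 0 ω‖ ^ p) μ)
    (hρp : Integrable (fun ω => ‖ρ 0 ω‖ ^ p) μ)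
    (hρlt : ∫ ω, ‖ρ 0 ω‖ ^ p ∂μ < 1) (m : ℤ) :
    ∀ᵐ ω ∂μ, Summable (fun j : ℕ => prodOp ρ m j ω (ε (m - j) ω)) := by
  have hp0 : (0:ℝ) < p := lt_of_lt_of_le one_pos hp
  set φ : (B →L[ℝ] B) → ℝ≥0∞ := fun T => ENNReal.ofReal (‖T‖ ^ p) with hφdef
  have hφm : Measurable φ := (measurable_norm.pow_const p).ennreal_ofReal
  set ψ : B → ℝ≥0∞ := fun x => ENNReal.ofReal (‖x‖ ^ p) with hψdef
  have hψm : Measurable ψ := (measurable_norm.pow_const p).ennreal_ofReal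
  set a := ∫⁻ ω, φ (ρ 0 ω) ∂μ with hadef
  set b := ∫⁻ ω, ψ (ε 0 ω) ∂μ with hbdef
  have haR : a = ENNReal.ofReal (∫ ω, ‖ρ 0 ω‖ ^ p ∂μ) :=
    (MeasureTheory.ofReal_integral_eq_lintegral_ofReal hρp
      (Filter.Eventually.of_forall fun ω => Real.rpow_nonneg (norm_nonneg _) p)).symm
  have hbR : b = ENNReal.ofReal (∫ ω, ‖ε 0 ω‖ ^ p ∂μ) :=
    (MeasureTheory.ofReal_integral_eq_lintegral_ofReal hεp
      (Filter.Eventually.of_forall fun ω => Real.rpow_nonneg (norm_nonneg _) p)).symm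
  have ha1 : a < 1 := by rw [haR]; exact ENNReal.ofReal_lt_one.mpr hρlt
  have haT : a ≠ ⊤ := ne_top_of_lt (lt_of_lt_of_le ha1 le_top)
  have hbT : b ≠ ⊤ := by rw [hbR]; exact ENNReal.ofReal_ne_top
  have hga : ∀ k, ∫⁻ ω, φ (ρ k ω) ∂μ = a := fun k => ((hρiid.2 k).comp hφm).lintegral_eq
  have hgind : iIndepFun (fun k ω => φ (ρ k ω)) μ :=
    hρiid.1.comp (fun _ => φ) (fun _ => hφm)
  set h : ℕ → Ω → ℝ :=
    fun j ω => (∏ i ∈ Finset.range j, ‖ρ (m - i) ω‖) * ‖ε (m - j) ω‖ with hhdef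
  have hhm : ∀ j, Measurable (h j) := fun j =>
    (Finset.measurable_prod _ fun i _ => (hρmeas _).norm).mul (hεmeas _).norm
  have hhnn : ∀ j ω, 0 ≤ h j ω := fun j ω =>
    mul_nonneg (Finset.prod_nonneg fun i _ => norm_nonneg _) (norm_nonneg _)
  -- the key moment computation
  have key : ∀ j : ℕ, ∫⁻ ω, (‖h j ω‖₊ : ℝ≥0∞) ^ p ∂μ = a ^ j * b := by
    intro j
    have hrw : ∀ ω, (‖h j ω‖₊ : ℝ≥0∞) ^ p
        = (∏ i ∈ Finset.range j, φ (ρ (m - i) ω)) * ψ (ε (m - j) ω) := by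
      intro ω
      rw [← enorm_eq_nnnorm, ← ofReal_norm, Real.norm_of_nonneg (hhnn j ω),
        ENNReal.ofReal_rpow_of_nonneg (hhnn j ω) hp0.le]
      have h1 : h j ω ^ p
          = (∏ i ∈ Finset.range j, ‖ρ (m - i) ω‖ ^ p) * ‖ε (m - j) ω‖ ^ p := by
        rw [hhdef]
        rw [Real.mul_rpow (Finset.prod_nonneg fun i _ => norm_nonneg _) (norm_nonneg _),
          Real.finset_prod_rpow _ _ (fun i _ => norm_nonneg _) p]
      rw [h1, ENNReal.ofReal_mul (Finset.prod_nonneg fun i _ =>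
        Real.rpow_nonneg (norm_nonneg _) p),
        ENNReal.ofReal_prod_of_nonneg (fun i _ => Real.rpow_nonneg (norm_nonneg _) p)]
    have hΦm : Measurable fun v : ℤ → B →L[ℝ] B => ∏ i ∈ Finset.range j, φ (v (m - i)) :=
      Finset.measurable_prod _ fun i _ => hφm.comp (measurable_pi_apply _)
    have hΨm : Measurable fun w : ℤ → B => ψ (w (m - j)) :=
      hψm.comp (measurable_pi_apply _)
    have hip : IndepFun (fun ω => ∏ i ∈ Finset.range j, φ (ρ (m - i) ω))
        (fun ω => ψ (ε (m - j) ω)) μ := hindep.comp hΦm hΨm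
    have hFm : Measurable fun ω => ∏ i ∈ Finset.range j, φ (ρ (m - i) ω) :=
      Finset.measurable_prod _ fun i _ => hφm.comp (hρmeas _)
    have hGm : Measurable fun ω => ψ (ε (m - j) ω) := hψm.comp (hεmeas _)
    have hmul := lintegral_mul_eq_lintegral_mul_lintegral_of_indepFun hFm hGm hip
    have hprodint : ∫⁻ ω, ∏ i ∈ Finset.range j, φ (ρ (m - i) ω) ∂μ = a ^ j := by
      have hinj : Function.Injective (fun i : ℕ => m - (i:ℤ)) := by
        intro x y hxy
        have h' : m - (x:ℤ) = m - (y:ℤ) := hxy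
        omega
      have h1 : ∀ ω, ∏ i ∈ Finset.range j, φ (ρ (m - i) ω)
          = ∏ k ∈ (Finset.range j).image (fun i : ℕ => m - (i:ℤ)), φ (ρ k ω) :=
        fun ω => (Finset.prod_image (f := fun k => φ (ρ k ω))
          fun x _ y _ hxy => hinj hxy).symm
      rw [lintegral_congr h1,
        lintegral_finset_prod_of_iIndep (g := fun k ω => φ (ρ k ω)) hgind (fun k => hφm.comp (hρmeas k)) _,
        Finset.prod_congr rfl (fun k _ => hga k), Finset.prod_const,
        Finset.card_image_of_injective _ hinj, Finset.card_range]
    calc ∫⁻ ω, (‖h j ω‖₊ : ℝ≥0∞) ^ p ∂μ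
        = ∫⁻ ω, ((fun ω => ∏ i ∈ Finset.range j, φ (ρ (m - i) ω))
            * fun ω => ψ (ε (m - j) ω)) ω ∂μ := lintegral_congr fun ω => hrw ω
      _ = (∫⁻ ω, ∏ i ∈ Finset.range j, φ (ρ (m - i) ω) ∂μ)
            * ∫⁻ ω, ψ (ε (m - j) ω) ∂μ := hmul
      _ = a ^ j * b := by
          rw [hprodint]
          congr 1
          exact ((hεiid.2 (m - j)).comp hψm).lintegral_eq
  -- L¹-L^p comparison
  have hS : ∀ j : ℕ, ∫⁻ ω, ENNReal.ofReal (h j ω) ∂μ ≤ (a ^ j * b) ^ (1/p) := by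
    intro j
    have h1 : ∫⁻ ω, ENNReal.ofReal (h j ω) ∂μ = eLpNorm (h j) 1 μ := by
      rw [eLpNorm_one_eq_lintegral_enorm]
      exact lintegral_congr fun ω => by
        rw [← ofReal_norm, Real.norm_of_nonneg (hhnn j ω)]
    have h2 : eLpNorm (h j) 1 μ ≤ eLpNorm (h j) (ENNReal.ofReal p) μ :=
      eLpNorm_le_eLpNorm_of_exponent_le (ENNReal.one_le_ofReal.mpr hp)
        (hhm j).aestronglyMeasurable
    have h3 : eLpNorm (h j) (ENNReal.ofReal p) μ
        = (∫⁻ ω, (‖h j ω‖₊ : ℝ≥0∞) ^ p ∂μ) ^ (1/p) := by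
      rw [eLpNorm_eq_lintegral_rpow_enorm_toReal
        (by simp only [ne_eq, ENNReal.ofReal_eq_zero, not_le]; linarith)
        ENNReal.ofReal_ne_top, ENNReal.toReal_ofReal hp0.le]
      rfl
    rw [h1, ← key j, ← h3]
    exact h2
  set r := a ^ (1/p) with hrdef
  have hrlt : r < 1 := ENNReal.rpow_lt_one ha1 (by positivity)
  have hsplit : ∀ j : ℕ, (a ^ j * b) ^ (1/p) = r ^ j * b ^ (1/p) := by
    intro j
    rw [ENNReal.mul_rpow_of_ne_top (ENNReal.pow_ne_top haT) hbT]
    congr 1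
    rw [← ENNReal.rpow_natCast a j, ← ENNReal.rpow_mul, hrdef,
      ← ENNReal.rpow_natCast (a ^ (1/p)) j, ← ENNReal.rpow_mul, mul_comm]
  have hfin : ∫⁻ ω, ∑' j : ℕ, ENNReal.ofReal (h j ω) ∂μ < ⊤ := by
    rw [lintegral_tsum fun j => ((hhm j).ennreal_ofReal).aemeasurable]
    refine lt_of_le_of_lt (ENNReal.tsum_le_tsum fun j => (hS j).trans_eq (hsplit j)) ?_
    rw [ENNReal.tsum_mul_right, ENNReal.tsum_geometric]
    refine ENNReal.mul_lt_top ?_ (ENNReal.rpow_lt_top_of_nonneg (by positivity) hbT)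
    exact ENNReal.inv_lt_top.mpr (tsub_pos_of_lt hrlt)
  have hae := MeasureTheory.ae_lt_top
    (Measurable.ennreal_tsum fun j => (hhm j).ennreal_ofReal) hfin.ne
  filter_upwards [hae] with ω hω
  have hle : ∀ j : ℕ, (‖prodOp ρ m j ω (ε (m - j) ω)‖₊ : ℝ≥0∞) ≤ ENNReal.ofReal (h j ω) := by
    intro j
    rw [← enorm_eq_nnnorm, ← ofReal_norm]
    exact ENNReal.ofReal_le_ofReal (prodOp_norm_le ρ j m ω _)
  have hne : ∑' j : ℕ, (‖prodOp ρ m j ω (ε (m - j) ω)‖₊ : ℝ≥0∞) ≠ ⊤ :=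
    (lt_of_le_of_lt (ENNReal.tsum_le_tsum hle) hω).ne
  exact Summable.of_nnnorm (ENNReal.tsum_coe_ne_top_iff_summable.mp hne)

/-- The series `X_n = μ₀ + ∑_{j≥0} A_{n,j} ε_{n-j}` satisfies the BRCA(1) recursion
`X_n - μ₀ = ρ_n (X_{n-1} - μ₀) + ε_n`. -/
theorem brca_series_solves_recursion
    (μ : Measure Ω) [IsProbabilityMeasure μ] (μ0 : B)
    (ρ : ℤ → Ω → B →L[ℝ] B) (ε : ℤ → Ω → B)
    (hρmeas : ∀ n, Measurable (ρ n)) (hεmeas : ∀ n, Measurable (ε n))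
    (hρiid : IIDZ ρ μ) (hεiid : IIDZ ε μ)
    (hindep : IndepFun (fun ω (n : ℤ) => ρ n ω) (fun ω (n : ℤ) => ε n ω) μ)
    (p : ℝ) (hp : 1 ≤ p)
    (hεmean : ∫ ω, ε 0 ω ∂μ = 0)
    (hεp : Integrable (fun ω => ‖ε 0 ω‖ ^ p) μ)
    (hρp : Integrable (fun ω => ‖ρ 0 ω‖ ^ p) μ)
    (hρlt : ∫ ω, ‖ρ 0 ω‖ ^ p ∂μ < 1)
    (X : ℤ → Ω → B)
    (hX : ∀ n ω, X n ω = μ0 + ∑' j : ℕ, prodOp ρ n j ω (ε (n - j) ω)) :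
    ∀ n : ℤ, ∀ᵐ ω ∂μ, X n ω - μ0 = ρ n ω (X (n-1) ω - μ0) + ε n ω := by
  intro n
  filter_upwards [brca_aux_summable μ ρ ε hρmeas hεmeas hρiid hεiid hindep p hp hεp hρp hρlt
    (n-1)] with ω hsum
  set S : ℕ → B := fun j => prodOp ρ (n-1) j ω (ε (n-1-j) ω) with hSdef
  have hT : ∀ j : ℕ, prodOp ρ n (j+1) ω (ε (n - ((j:ℤ)+1)) ω) = ρ n ω (S j) := by
    intro j
    have h1 : n - ((j:ℤ)+1) = n - 1 - j := by omega
    rw [h1]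
    rfl
  have hsum2 : Summable fun j : ℕ => ρ n ω (S j) := hsum.map (ρ n ω) (ρ n ω).continuous
  have hTsum : Summable fun j : ℕ => prodOp ρ n j ω (ε (n - j) ω) := by
    rw [← summable_nat_add_iff 1]
    refine hsum2.congr fun j => ?_
    show ρ n ω (S j) = prodOp ρ n (j+1) ω (ε (n - ((j+1:ℕ):ℤ)) ω)
    rw [← hT j]
    push_cast
    ring_nf
  have hX1 : X n ω - μ0 = ∑' j : ℕ, prodOp ρ n j ω (ε (n - j) ω) := by
    rw [hX n ω]; exact add_sub_cancel_left μ0 _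
  have hX2 : X (n-1) ω - μ0 = ∑' j : ℕ, S j := by
    rw [hX (n-1) ω]; exact add_sub_cancel_left μ0 _
  rw [hX1, hX2, Summable.tsum_eq_zero_add hTsum]
  have h0 : prodOp ρ n 0 ω (ε (n - ((0:ℕ):ℤ)) ω) = ε n ω := by
    norm_num
    rfl
  have hrest : ∑' j : ℕ, prodOp ρ n (j+1) ω (ε (n - ((j:ℕ)+1 : ℤ)) ω)
      = ρ n ω (∑' j, S j) := by
    rw [tsum_congr hT]
    exact ((ρ n ω).map_tsum hsum).symm
  rw [h0]
  rw [show (∑' j : ℕ, prodOp ρ n (j+1) ω (ε (n - ((j:ℕ)+1:ℕ)) ω))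
      = ρ n ω (∑' j, S j) from by
    rw [← hrest]
    exact tsum_congr fun j => by push_cast; ring_nf]
  exact add_comm _ _
end
end

section
/- Under the assumptions (ε_n) i.i.d. mean-zero in L^p_B, (ρ_n) i.i.d. independent of (ε_n), E‖ρ_0‖_L^p < 1, any strictly stationary solution (X_n) of the recursion X_n − μ = ρ_n(X_{n-1} − μ) + ε_n in L^p_B coincides (in L^p) with μ + Σ_{j=0}^∞ A_{n,j} ε_{n-j}; i.e., ‖X_n − μ − Σ_{j=0}^{n-1} A_{n,j} ε_{n-j}‖_{L^p}^p → 0 as n → ∞, so the stationary solution is unique. -/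
set_option linter.unusedSectionVars false
set_option maxHeartbeats 1000000

open MeasureTheory Filter Topology ProbabilityTheory
open scoped ENNReal NNReal
noncomputable section

variable {Ω : Type*} [MeasurableSpace Ω]
  {B : Type*} [NormedAddCommGroup B] [NormedSpace ℝ B] [CompleteSpace B]
  [TopologicalSpace.SeparableSpace B] [MeasurableSpace B] [BorelSpace B]
  [MeasurableSpace (B →L[ℝ] B)] [BorelSpace (B →L[ℝ] B)]

/- ### Auxiliary lemmas -/

private lemma ofReal_norm_eq_coe_nnnorm {E : Type*} [SeminormedAddCommGroup E] (a : E) :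
    ENNReal.ofReal ‖a‖ = (‖a‖₊ : ℝ≥0∞) :=
  ENNReal.ofReal_eq_coe_nnreal (norm_nonneg a)

private lemma real_rpow_add_le {a b p : ℝ} (ha : 0 ≤ a) (hb : 0 ≤ b) (hp : 0 ≤ p) :
    (a + b) ^ p ≤ 2 ^ p * (a ^ p + b ^ p) := by
  have h1 : a + b ≤ 2 * max a b := by
    rcases le_total a b with h | h
    · rw [max_eq_right h]; linarith
    · rw [max_eq_left h]; linarith
  calc (a + b) ^ p ≤ (2 * max a b) ^ p :=
        Real.rpow_le_rpow (by linarith) h1 hp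
    _ = 2 ^ p * (max a b) ^ p := Real.mul_rpow (by norm_num) (le_max_of_le_left ha)
    _ ≤ 2 ^ p * (a ^ p + b ^ p) := by
        refine mul_le_mul_of_nonneg_left ?_ (Real.rpow_nonneg (by norm_num) p)
        rcases le_total a b with h | h
        · rw [max_eq_right h]; nlinarith [Real.rpow_nonneg ha p]
        · rw [max_eq_left h]; nlinarith [Real.rpow_nonneg hb p]

private lemma prodOp_succ_right (ρ : ℤ → Ω → B →L[ℝ] B) :
    ∀ (j : ℕ) (n : ℤ) (ω : Ω),
      prodOp ρ n (j + 1) ω = (prodOp ρ n j ω).comp (ρ (n - j) ω) := by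
  intro j
  induction j with
  | zero =>
      intro n ω
      show (ρ n ω).comp (prodOp ρ (n-1) 0 ω) = (prodOp ρ n 0 ω).comp (ρ (n - (0:ℕ)) ω)
      simp [prodOp]
  | succ j ih =>
      intro n ω
      show (ρ n ω).comp (prodOp ρ (n-1) (j+1) ω) = _
      rw [ih (n-1) ω]
      rw [← ContinuousLinearMap.comp_assoc]
      have h2 : (prodOp ρ n (j+1) ω) = (ρ n ω).comp (prodOp ρ (n-1) j ω) := rfl
      rw [h2]
      congr 2
      push_cast
      ring

private lemma measurable_prodOp_apply {ρ : ℤ → Ω → B →L[ℝ] B}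
    (hρmeas : ∀ n, Measurable (ρ n)) {g : Ω → B} (hg : Measurable g) :
    ∀ (j : ℕ) (n : ℤ), Measurable (fun ω => prodOp ρ n j ω (g ω)) := by
  haveI : SecondCountableTopology B := UniformSpace.secondCountable_of_separable B
  have happly : Measurable (fun q : (B →L[ℝ] B) × B => q.1 q.2) :=
    isBoundedBilinearMap_apply.continuous.measurable
  intro j
  induction j with
  | zero => intro n; simpa [prodOp] using hg
  | succ j ih =>
      intro n
      have h : (fun ω => prodOp ρ n (j+1) ω (g ω))
          = fun ω => (ρ n ω) (prodOp ρ (n-1) j ω (g ω)) := rfl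
      rw [h]
      exact happly.comp ((hρmeas n).prodMk (ih (n-1)))

private lemma norm_prodOp_apply_le (ρ : ℤ → Ω → B →L[ℝ] B) :
    ∀ (j : ℕ) (n : ℤ) (ω : Ω) (x : B),
      ‖prodOp ρ n j ω x‖ ≤ (∏ i ∈ Finset.range j, ‖ρ (n - i) ω‖) * ‖x‖ := by
  intro j
  induction j with
  | zero => intro n ω x; simp [prodOp]
  | succ j ih =>
      intro n ω x
      have h1 : prodOp ρ n (j+1) ω x = ρ n ω (prodOp ρ (n-1) j ω x) := rfl
      rw [h1]
      have h2 : ∏ i ∈ Finset.range (j+1), ‖ρ (n - i) ω‖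
          = (∏ i ∈ Finset.range j, ‖ρ (n - 1 - i) ω‖) * ‖ρ n ω‖ := by
        rw [Finset.prod_range_succ' (fun i => ‖ρ (n - i) ω‖) j]
        simp only [Nat.cast_zero, sub_zero]
        congr 1
        refine Finset.prod_congr rfl fun i _ => ?_
        congr 2
        push_cast
        ring
      rw [h2]
      calc ‖ρ n ω (prodOp ρ (n-1) j ω x)‖
          ≤ ‖ρ n ω‖ * ‖prodOp ρ (n-1) j ω x‖ := (ρ n ω).le_opNorm _
        _ ≤ ‖ρ n ω‖ * ((∏ i ∈ Finset.range j, ‖ρ (n - 1 - i) ω‖) * ‖x‖) :=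
            mul_le_mul_of_nonneg_left (ih (n-1) ω x) (norm_nonneg _)
        _ = (∏ i ∈ Finset.range j, ‖ρ (n - 1 - i) ω‖) * ‖ρ n ω‖ * ‖x‖ := by ring

private lemma nnnorm_prodOp_apply_le (ρ : ℤ → Ω → B →L[ℝ] B) {p : ℝ} (hp0 : 0 ≤ p)
    (j : ℕ) (n : ℤ) (ω : Ω) (x : B) :
    ((‖prodOp ρ n j ω x‖₊ : ℝ≥0∞)) ^ p
      ≤ (∏ i ∈ Finset.range j, ((‖ρ (n - i) ω‖₊ : ℝ≥0∞)) ^ p) * ((‖x‖₊ : ℝ≥0∞)) ^ p := by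
  have h := norm_prodOp_apply_le ρ j n ω x
  have h1 : ((‖prodOp ρ n j ω x‖₊ : ℝ≥0∞))
      ≤ (∏ i ∈ Finset.range j, ((‖ρ (n - i) ω‖₊ : ℝ≥0∞))) * ((‖x‖₊ : ℝ≥0∞)) := by
    rw [← ofReal_norm_eq_coe_nnnorm, ← ofReal_norm_eq_coe_nnnorm]
    have hprod : (∏ i ∈ Finset.range j, ((‖ρ (n - i) ω‖₊ : ℝ≥0∞)))
        = ENNReal.ofReal (∏ i ∈ Finset.range j, ‖ρ (n - i) ω‖) := by
      rw [ENNReal.ofReal_prod_of_nonneg fun i _ => norm_nonneg _]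
      exact Finset.prod_congr rfl fun i _ => (ofReal_norm_eq_coe_nnnorm _).symm
    rw [hprod, ← ENNReal.ofReal_mul (Finset.prod_nonneg fun i _ => norm_nonneg _)]
    exact ENNReal.ofReal_le_ofReal h
  calc ((‖prodOp ρ n j ω x‖₊ : ℝ≥0∞)) ^ p
      ≤ ((∏ i ∈ Finset.range j, ((‖ρ (n - i) ω‖₊ : ℝ≥0∞))) * ((‖x‖₊ : ℝ≥0∞))) ^ p :=
        ENNReal.rpow_le_rpow h1 hp0
    _ = (∏ i ∈ Finset.range j, ((‖ρ (n - i) ω‖₊ : ℝ≥0∞)) ^ p) * ((‖x‖₊ : ℝ≥0∞)) ^ p := by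
        rw [ENNReal.mul_rpow_of_nonneg _ _ hp0, ENNReal.prod_rpow_of_nonneg hp0]

private lemma iterate_sol {μ : Measure Ω} {ρ : ℤ → Ω → B →L[ℝ] B} {ε : ℤ → Ω → B}
    {X : ℤ → Ω → B} {μ0 : B}
    (hXsol : ∀ n : ℤ, ∀ᵐ ω ∂μ, X n ω - μ0 = ρ n ω (X (n-1) ω - μ0) + ε n ω) :
    ∀ (n : ℤ) (k : ℕ), ∀ᵐ ω ∂μ,
      X n ω - μ0 = (∑ j ∈ Finset.range k, prodOp ρ n j ω (ε (n - j) ω))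
        + prodOp ρ n k ω (X (n - k) ω - μ0) := by
  intro n k
  induction k with
  | zero => filter_upwards with ω; simp [prodOp]
  | succ k ih =>
      filter_upwards [ih, hXsol (n - k)] with ω h1 h2
      rw [h1, h2, map_add, Finset.sum_range_succ]
      have key : prodOp ρ n k ω (ρ (n - (k:ℤ)) ω (X (n - (k:ℤ) - 1) ω - μ0))
          = prodOp ρ n (k+1) ω (X (n - ((k:ℕ)+1 : ℕ)) ω - μ0) := by
        rw [prodOp_succ_right ρ k n ω]
        rw [show ((n:ℤ) - ((k+1:ℕ) : ℤ)) = n - (k:ℤ) - 1 by push_cast; ring]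
        rfl
      rw [key]
      abel

private lemma lintegral_prod_G {μ : Measure Ω} [IsProbabilityMeasure μ]
    {ρ : ℤ → Ω → B →L[ℝ] B} (hρmeas : ∀ n, Measurable (ρ n))
    (hρiid : IIDZ ρ μ) (p : ℝ) (s : Finset ℤ) :
    ∫⁻ ω, ∏ i ∈ s, ((‖ρ i ω‖₊ : ℝ≥0∞)) ^ p ∂μ
      = (∫⁻ ω, ((‖ρ 0 ω‖₊ : ℝ≥0∞)) ^ p ∂μ) ^ s.card := by
  classical
  have hφmeas : Measurable (fun T : B →L[ℝ] B => ((‖T‖₊ : ℝ≥0∞)) ^ p) :=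
    ENNReal.continuous_rpow_const.measurable.comp measurable_nnnorm.coe_nnreal_ennreal
  set G : ℤ → Ω → ℝ≥0∞ := fun i ω => ((‖ρ i ω‖₊ : ℝ≥0∞)) ^ p with hG
  have hGmeas : ∀ i, Measurable (G i) := fun i => hφmeas.comp (hρmeas i)
  have hGindep : iIndepFun G μ :=
    hρiid.1.comp (fun _ => fun T => ((‖T‖₊ : ℝ≥0∞)) ^ p) (fun _ => hφmeas)
  have hGident : ∀ i, ∫⁻ ω, G i ω ∂μ = ∫⁻ ω, G 0 ω ∂μ := fun i =>
    ((hρiid.2 i).comp hφmeas).lintegral_eq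
  induction s using Finset.induction_on with
  | empty => simp
  | insert i s hi ih =>
      simp only [Finset.prod_insert hi]
      have hindep2 : IndepFun (G i) (fun ω => ∏ j ∈ s, G j ω) μ := by
        have h := (hGindep.indepFun_finsetProd_of_notMem hGmeas hi).symm
        have he : (∏ j ∈ s, G j) = fun ω => ∏ j ∈ s, G j ω := by
          funext ω; simp [Finset.prod_apply]
        rwa [he] at h
      have hcalc := lintegral_mul_eq_lintegral_mul_lintegral_of_indepFun (hGmeas i)
        (Finset.measurable_prod s fun j _ => hGmeas j) hindep2
      simp only [Pi.mul_apply] at hcalc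
      rw [show (∫⁻ ω, G i ω * ∏ j ∈ s, G j ω ∂μ)
          = (∫⁻ ω, G i ω ∂μ) * ∫⁻ ω, ∏ j ∈ s, G j ω ∂μ from hcalc]
      rw [ih, hGident i, Finset.card_insert_of_notMem hi, pow_succ]
      ring

private lemma lintegral_prodG_range {μ : Measure Ω} [IsProbabilityMeasure μ]
    {ρ : ℤ → Ω → B →L[ℝ] B} (hρmeas : ∀ n, Measurable (ρ n))
    (hρiid : IIDZ ρ μ) (p : ℝ) (n : ℤ) (j : ℕ) :
    ∫⁻ ω, ∏ i ∈ Finset.range j, ((‖ρ (n - i) ω‖₊ : ℝ≥0∞)) ^ p ∂μ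
      = (∫⁻ ω, ((‖ρ 0 ω‖₊ : ℝ≥0∞)) ^ p ∂μ) ^ j := by
  classical
  have hinj : Function.Injective (fun i : ℕ => n - (i : ℤ)) := by
    intro a b hab
    simp only at hab
    omega
  have h1 : ∀ ω : Ω, (∏ i ∈ Finset.range j, ((‖ρ (n - i) ω‖₊ : ℝ≥0∞)) ^ p)
      = ∏ i ∈ (Finset.range j).image (fun i : ℕ => n - (i : ℤ)),
          ((‖ρ i ω‖₊ : ℝ≥0∞)) ^ p := by
    intro ω
    rw [Finset.prod_image (fun a _ b _ h => hinj h)]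
  simp only [h1]
  rw [lintegral_prod_G hρmeas hρiid p]
  congr 1
  rw [Finset.card_image_of_injective _ hinj, Finset.card_range]

private lemma lintegral_term_le {μ : Measure Ω} [IsProbabilityMeasure μ]
    {ρ : ℤ → Ω → B →L[ℝ] B} {ε : ℤ → Ω → B}
    (hρmeas : ∀ n, Measurable (ρ n)) (hεmeas : ∀ n, Measurable (ε n))
    (hρiid : IIDZ ρ μ) (hεiid : IIDZ ε μ)
    (hindep : IndepFun (fun ω (n : ℤ) => ρ n ω) (fun ω (n : ℤ) => ε n ω) μ)
    {p : ℝ} (hp0 : 0 ≤ p) (n : ℤ) (j : ℕ) :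
    ∫⁻ ω, ((‖prodOp ρ n j ω (ε (n - j) ω)‖₊ : ℝ≥0∞)) ^ p ∂μ
      ≤ (∫⁻ ω, ((‖ρ 0 ω‖₊ : ℝ≥0∞)) ^ p ∂μ) ^ j
          * ∫⁻ ω, ((‖ε 0 ω‖₊ : ℝ≥0∞)) ^ p ∂μ := by
  classical
  set F : Ω → ℝ≥0∞ := fun ω => ∏ i ∈ Finset.range j, ((‖ρ (n - i) ω‖₊ : ℝ≥0∞)) ^ p with hF
  set Gε : Ω → ℝ≥0∞ := fun ω => ((‖ε (n - j) ω‖₊ : ℝ≥0∞)) ^ p with hGε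
  have hφmeas : Measurable (fun x : B => ((‖x‖₊ : ℝ≥0∞)) ^ p) :=
    ENNReal.continuous_rpow_const.measurable.comp measurable_nnnorm.coe_nnreal_ennreal
  have hFmeas : Measurable F :=
    Finset.measurable_prod _ fun i _ =>
      (ENNReal.continuous_rpow_const.measurable.comp
        measurable_nnnorm.coe_nnreal_ennreal).comp (hρmeas _)
  have hGεmeas : Measurable Gε := hφmeas.comp (hεmeas _)
  have hFG : IndepFun F Gε μ := by
    have hΦ : Measurable (fun u : ℤ → (B →L[ℝ] B) =>
        ∏ i ∈ Finset.range j, ((‖u (n - i)‖₊ : ℝ≥0∞)) ^ p) :=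
      Finset.measurable_prod _ fun i _ =>
        (ENNReal.continuous_rpow_const.measurable.comp
          measurable_nnnorm.coe_nnreal_ennreal).comp (measurable_pi_apply _)
    have hΨ : Measurable (fun v : ℤ → B => ((‖v (n - j)‖₊ : ℝ≥0∞)) ^ p) :=
      hφmeas.comp (measurable_pi_apply _)
    exact hindep.comp hΦ hΨ
  calc ∫⁻ ω, ((‖prodOp ρ n j ω (ε (n - j) ω)‖₊ : ℝ≥0∞)) ^ p ∂μ
      ≤ ∫⁻ ω, F ω * Gε ω ∂μ :=
        lintegral_mono fun ω => nnnorm_prodOp_apply_le ρ hp0 j n ω (ε (n - j) ω)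
    _ = (∫⁻ ω, F ω ∂μ) * ∫⁻ ω, Gε ω ∂μ := by
        have h := lintegral_mul_eq_lintegral_mul_lintegral_of_indepFun hFmeas hGεmeas hFG
        simpa [Pi.mul_apply] using h
    _ = (∫⁻ ω, ((‖ρ 0 ω‖₊ : ℝ≥0∞)) ^ p ∂μ) ^ j * ∫⁻ ω, ((‖ε 0 ω‖₊ : ℝ≥0∞)) ^ p ∂μ := by
        rw [show (∫⁻ ω, F ω ∂μ)
            = ∫⁻ ω, ∏ i ∈ Finset.range j, ((‖ρ (n - i) ω‖₊ : ℝ≥0∞)) ^ p ∂μ from rfl]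
        rw [lintegral_prodG_range hρmeas hρiid p n j]
        congr 1
        exact ((hεiid.2 (n - j)).comp hφmeas).lintegral_eq

/-- Uniqueness: any strictly stationary `L^p` solution of the BRCA(1) recursion coincides
in `L^p` with `μ₀ + ∑_{j≥0} A_{n,j} ε_{n-j}`. -/
theorem brca_stationary_solution_unique
    (μ : Measure Ω) [IsProbabilityMeasure μ] (μ0 : B)
    (ρ : ℤ → Ω → B →L[ℝ] B) (ε : ℤ → Ω → B)
    (hρmeas : ∀ n, Measurable (ρ n)) (hεmeas : ∀ n, Measurable (ε n))
    (hρiid : IIDZ ρ μ) (hεiid : IIDZ ε μ)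
    (hindep : IndepFun (fun ω (n : ℤ) => ρ n ω) (fun ω (n : ℤ) => ε n ω) μ)
    (p : ℝ) (hp : 1 ≤ p)
    (hεmean : ∫ ω, ε 0 ω ∂μ = 0)
    (hεp : Integrable (fun ω => ‖ε 0 ω‖ ^ p) μ)
    (hρp : Integrable (fun ω => ‖ρ 0 ω‖ ^ p) μ)
    (hρlt : ∫ ω, ‖ρ 0 ω‖ ^ p ∂μ < 1)
    (X : ℤ → Ω → B) (hXmeas : ∀ n, Measurable (X n))
    (hXstat : StrictlyStationary X μ)
    (hXp : ∀ n, Integrable (fun ω => ‖X n ω‖ ^ p) μ)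
    (hXsol : ∀ n : ℤ, ∀ᵐ ω ∂μ, X n ω - μ0 = ρ n ω (X (n-1) ω - μ0) + ε n ω) :
    Tendsto (fun n : ℕ =>
        ∫ ω, ‖X n ω - μ0 - ∑ j ∈ Finset.range n, prodOp ρ n j ω (ε ((n : ℤ) - j) ω)‖ ^ p ∂μ)
      atTop (𝓝 0) := by
  classical
  haveI : SecondCountableTopology B := UniformSpace.secondCountable_of_separable B
  have hp0 : 0 ≤ p := le_trans zero_le_one hp
  have hppos : 0 < p := lt_of_lt_of_le zero_lt_one hp
  have hconv : ∀ x : B, ENNReal.ofReal (‖x‖ ^ p) = ((‖x‖₊ : ℝ≥0∞)) ^ p := by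
    intro x
    rw [← ENNReal.ofReal_rpow_of_nonneg (norm_nonneg _) hp0, ofReal_norm_eq_coe_nnnorm]
  have hconvT : ∀ T : B →L[ℝ] B, ENNReal.ofReal (‖T‖ ^ p) = ((‖T‖₊ : ℝ≥0∞)) ^ p := by
    intro T
    rw [← ENNReal.ofReal_rpow_of_nonneg (norm_nonneg _) hp0, ofReal_norm_eq_coe_nnnorm]
  have hφB : Measurable (fun x : B => ((‖x‖₊ : ℝ≥0∞)) ^ p) :=
    ENNReal.continuous_rpow_const.measurable.comp measurable_nnnorm.coe_nnreal_ennreal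
  have hφBc : Continuous (fun x : B => ((‖x‖₊ : ℝ≥0∞)) ^ p) :=
    ENNReal.continuous_rpow_const.comp (ENNReal.continuous_coe.comp continuous_nnnorm)
  -- constants
  set A : ℝ≥0∞ := ∫⁻ ω, ((‖ρ 0 ω‖₊ : ℝ≥0∞)) ^ p ∂μ with hA
  have hAeq : A = ENNReal.ofReal (∫ ω, ‖ρ 0 ω‖ ^ p ∂μ) := by
    rw [ofReal_integral_eq_lintegral_ofReal hρp
      (ae_of_all _ fun ω => Real.rpow_nonneg (norm_nonneg _) p), hA]
    exact lintegral_congr fun ω => (hconvT (ρ 0 ω)).symm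
  have hA1 : A < 1 := by rw [hAeq]; exact ENNReal.ofReal_lt_one.2 hρlt
  have hAtop : A ≠ ⊤ := (hA1.trans_le le_top).ne
  set Eε : ℝ≥0∞ := ∫⁻ ω, ((‖ε 0 ω‖₊ : ℝ≥0∞)) ^ p ∂μ with hEε
  have hEεtop : Eε ≠ ⊤ := by
    have h : Eε = ENNReal.ofReal (∫ ω, ‖ε 0 ω‖ ^ p ∂μ) := by
      rw [ofReal_integral_eq_lintegral_ofReal hεp
        (ae_of_all _ fun ω => Real.rpow_nonneg (norm_nonneg _) p), hEε]
      exact lintegral_congr fun ω => (hconv (ε 0 ω)).symm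
    rw [h]; exact ENNReal.ofReal_ne_top
  -- X 0 - μ0 has finite p-th moment
  have hX0int : Integrable (fun ω => ‖X 0 ω - μ0‖ ^ p) μ := by
    refine Integrable.mono' (g := fun ω => 2 ^ p * (‖X 0 ω‖ ^ p + ‖μ0‖ ^ p))
      (((hXp 0).add (integrable_const _)).const_mul _)
      (((Real.continuous_rpow_const hp0).measurable.comp
        ((hXmeas 0).sub measurable_const).norm).aestronglyMeasurable) ?_
    filter_upwards with ω
    rw [Real.norm_eq_abs, abs_of_nonneg (Real.rpow_nonneg (norm_nonneg _) p)]
    calc ‖X 0 ω - μ0‖ ^ p ≤ (‖X 0 ω‖ + ‖μ0‖) ^ p :=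
          Real.rpow_le_rpow (norm_nonneg _) (norm_sub_le _ _) hp0
      _ ≤ 2 ^ p * (‖X 0 ω‖ ^ p + ‖μ0‖ ^ p) :=
          real_rpow_add_le (norm_nonneg _) (norm_nonneg _) hp0
  set C0 : ℝ≥0∞ := ∫⁻ ω, ((‖X 0 ω - μ0‖₊ : ℝ≥0∞)) ^ p ∂μ with hC0
  have hC0top : C0 ≠ ⊤ := by
    have h : C0 = ENNReal.ofReal (∫ ω, ‖X 0 ω - μ0‖ ^ p ∂μ) := by
      rw [ofReal_integral_eq_lintegral_ofReal hX0int
        (ae_of_all _ fun ω => Real.rpow_nonneg (norm_nonneg _) p), hC0]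
      exact lintegral_congr fun ω => (hconv (X 0 ω - μ0)).symm
    rw [h]; exact ENNReal.ofReal_ne_top
  have hψmeas : Measurable (fun x : B => ((‖x - μ0‖₊ : ℝ≥0∞)) ^ p) :=
    hφB.comp (measurable_id.sub measurable_const)
  -- one-dimensional stationarity
  have hXident : ∀ m : ℤ, IdentDistrib (X m) (X 0) μ μ := by
    intro m
    have h := (hXstat (-m)).comp (measurable_pi_apply m)
    simpa [Function.comp_def, add_neg_cancel] using h
  have hCconst : ∀ m : ℤ, ∫⁻ ω, ((‖X m ω - μ0‖₊ : ℝ≥0∞)) ^ p ∂μ = C0 := by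
    intro m
    exact ((hXident m).comp hψmeas).lintegral_eq
  -- geometric quantities
  set b : ℝ≥0∞ := A ^ (1/p) with hb
  have hb1 : b < 1 := ENNReal.rpow_lt_one hA1 (by positivity)
  set c : ℝ≥0∞ := Eε ^ (1/p) with hc
  have hctop : c ≠ ⊤ := ENNReal.rpow_ne_top_of_nonneg (by positivity) hEεtop
  have h1bne : ((1 : ℝ≥0∞) - b) ≠ 0 := by
    simp only [ne_eq, tsub_eq_zero_iff_le, not_le]
    exact hb1
  have h1btop : ((1 : ℝ≥0∞) - b)⁻¹ ≠ ⊤ := ENNReal.inv_ne_top.2 h1bne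
  set K : ℝ≥0∞ := (1 - b)⁻¹ * c with hK
  have hKtop : K ≠ ⊤ := ENNReal.mul_ne_top h1btop hctop
  set D : ℕ → ℝ≥0∞ := fun n => A ^ n * K ^ p with hD
  have hDtop : ∀ n, D n ≠ ⊤ := fun n =>
    ENNReal.mul_ne_top (ENNReal.pow_ne_top hAtop) (ENNReal.rpow_ne_top_of_nonneg hp0 hKtop)
  have hDlim : Tendsto D atTop (𝓝 0) := by
    have h := ENNReal.Tendsto.mul_const
      (ENNReal.tendsto_pow_atTop_nhds_zero_of_lt_one hA1)
      (Or.inr (ENNReal.rpow_ne_top_of_nonneg hp0 hKtop))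
    simpa [hD] using h
  -- exponent bookkeeping
  have hq0 : (ENNReal.ofReal p) ≠ 0 := by
    simp only [ne_eq, ENNReal.ofReal_eq_zero, not_le]
    exact hppos
  have hqt : (ENNReal.ofReal p).toReal = p := ENNReal.toReal_ofReal hp0
  -- measurability of the terms
  have hterm_meas : ∀ (n : ℤ) (j : ℕ),
      Measurable (fun ω => prodOp ρ n j ω (ε (n - j) ω)) :=
    fun n j => measurable_prodOp_apply hρmeas (hεmeas _) j n
  -- L^p bound for each term
  have hterm_eLp : ∀ (n : ℤ) (j : ℕ),
      eLpNorm (fun ω => prodOp ρ n j ω (ε (n - j) ω)) (ENNReal.ofReal p) μ ≤ b ^ j * c := by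
    intro n j
    rw [eLpNorm_eq_lintegral_rpow_enorm_toReal hq0 ENNReal.ofReal_ne_top, hqt]
    refine le_trans (ENNReal.rpow_le_rpow
      (lintegral_term_le hρmeas hεmeas hρiid hεiid hindep hp0 n j) (by positivity))
      (le_of_eq ?_)
    rw [ENNReal.mul_rpow_of_nonneg _ _ (by positivity : (0:ℝ) ≤ 1/p)]
    rw [hb, hc]
    congr 1
    rw [← ENNReal.rpow_natCast A j, ← ENNReal.rpow_mul, mul_comm, ENNReal.rpow_mul,
      ENNReal.rpow_natCast]
  -- bound for partial sums over Ico n K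
  have hPbound : ∀ (n : ℕ) (m : ℕ),
      ∫⁻ ω, ((‖∑ j ∈ Finset.Ico n m,
          prodOp ρ (n:ℤ) j ω (ε ((n:ℤ) - j) ω)‖₊ : ℝ≥0∞)) ^ p ∂μ ≤ D n := by
    intro n m
    have hfun : (fun ω => ∑ j ∈ Finset.Ico n m, prodOp ρ (n:ℤ) j ω (ε ((n:ℤ) - j) ω))
        = ∑ j ∈ Finset.Ico n m, (fun ω => prodOp ρ (n:ℤ) j ω (ε ((n:ℤ) - j) ω)) := by
      funext ω; simp
    have h2 : eLpNorm (fun ω => ∑ j ∈ Finset.Ico n m,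
        prodOp ρ (n:ℤ) j ω (ε ((n:ℤ) - j) ω)) (ENNReal.ofReal p) μ
        ≤ ∑ j ∈ Finset.Ico n m,
            eLpNorm (fun ω => prodOp ρ (n:ℤ) j ω (ε ((n:ℤ) - j) ω)) (ENNReal.ofReal p) μ := by
      rw [hfun]
      exact eLpNorm_sum_le (fun j _ => (hterm_meas _ j).aestronglyMeasurable)
        (ENNReal.one_le_ofReal.2 hp)
    have h3 : (∑ j ∈ Finset.Ico n m,
        eLpNorm (fun ω => prodOp ρ (n:ℤ) j ω (ε ((n:ℤ) - j) ω)) (ENNReal.ofReal p) μ)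
        ≤ (∑ j ∈ Finset.Ico n m, b ^ j) * c := by
      rw [Finset.sum_mul]
      exact Finset.sum_le_sum fun j _ => hterm_eLp _ j
    have h5 : (∑ j ∈ Finset.Ico n m, b ^ j) ≤ b ^ n * (1 - b)⁻¹ := by
      rw [Finset.sum_Ico_eq_sum_range]
      calc ∑ i ∈ Finset.range (m - n), b ^ (n + i)
          = b ^ n * ∑ i ∈ Finset.range (m - n), b ^ i := by
            rw [Finset.mul_sum]; exact Finset.sum_congr rfl fun i _ => pow_add b n i
        _ ≤ b ^ n * ∑' i : ℕ, b ^ i := mul_le_mul' le_rfl (ENNReal.sum_le_tsum _)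
        _ = b ^ n * (1 - b)⁻¹ := by rw [ENNReal.tsum_geometric]
    have h6 : eLpNorm (fun ω => ∑ j ∈ Finset.Ico n m,
        prodOp ρ (n:ℤ) j ω (ε ((n:ℤ) - j) ω)) (ENNReal.ofReal p) μ ≤ b ^ n * K := by
      refine le_trans h2 (le_trans h3 ?_)
      rw [hK, ← mul_assoc]
      exact mul_le_mul_left h5 c
    have h7 : ∫⁻ ω, ((‖∑ j ∈ Finset.Ico n m,
        prodOp ρ (n:ℤ) j ω (ε ((n:ℤ) - j) ω)‖₊ : ℝ≥0∞)) ^ p ∂μ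
        = (eLpNorm (fun ω => ∑ j ∈ Finset.Ico n m,
            prodOp ρ (n:ℤ) j ω (ε ((n:ℤ) - j) ω)) (ENNReal.ofReal p) μ) ^ p := by
      rw [eLpNorm_eq_lintegral_rpow_enorm_toReal hq0 ENNReal.ofReal_ne_top, hqt,
        ← ENNReal.rpow_mul, one_div_mul_cancel hppos.ne', ENNReal.rpow_one]
      rfl
    rw [h7]
    calc (eLpNorm (fun ω => ∑ j ∈ Finset.Ico n m,
        prodOp ρ (n:ℤ) j ω (ε ((n:ℤ) - j) ω)) (ENNReal.ofReal p) μ) ^ p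
        ≤ (b ^ n * K) ^ p := ENNReal.rpow_le_rpow h6 hp0
      _ = A ^ n * K ^ p := by
          rw [ENNReal.mul_rpow_of_nonneg _ _ hp0]
          congr 1
          rw [hb, ← ENNReal.rpow_natCast (A ^ (1/p)) n, ← ENNReal.rpow_mul,
            ← ENNReal.rpow_mul, show (1/p) * ((n:ℝ) * p) = (n:ℝ) by field_simp,
            ENNReal.rpow_natCast]
  -- convergence in measure of the remainder terms
  have hTmeas : ∀ (n : ℤ) (k : ℕ),
      Measurable (fun ω => prodOp ρ n k ω (X (n - k) ω - μ0)) :=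
    fun n k => measurable_prodOp_apply hρmeas ((hXmeas _).sub measurable_const) k n
  have hTmeasure : ∀ n : ℕ, TendstoInMeasure μ
      (fun k ω => prodOp ρ (n:ℤ) k ω (X ((n:ℤ) - k) ω - μ0)) atTop (0 : Ω → B) := by
    intro n
    rw [tendstoInMeasure_iff_dist]
    intro δ hδ
    simp only [Pi.zero_apply, dist_zero_right]
    set δ' : ℝ≥0∞ := (ENNReal.ofReal δ) ^ p with hδ'
    have hδ'0 : δ' ≠ 0 :=
      (ENNReal.rpow_pos (ENNReal.ofReal_pos.2 hδ) ENNReal.ofReal_ne_top).ne'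
    have hδ't : δ' ≠ ⊤ := ENNReal.rpow_ne_top_of_nonneg hp0 ENNReal.ofReal_ne_top
    set A' : ℝ≥0∞ := max A 2⁻¹ with hA'
    have hA'1 : A' < 1 := max_lt hA1 (ENNReal.inv_lt_one.2 (by norm_num : (1:ℝ≥0∞) < 2))
    have hA'0 : A' ≠ 0 :=
      (lt_of_lt_of_le (ENNReal.inv_pos.2 ENNReal.ofNat_ne_top) (le_max_right _ _)).ne'
    have hA't : A' ≠ ⊤ := (hA'1.trans_le le_top).ne
    set tt : ℕ → ℝ≥0∞ := fun k => A' ^ ((k : ℝ)/2) with htt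
    have htt0 : ∀ k, tt k ≠ 0 := fun k =>
      (ENNReal.rpow_pos (zero_lt_iff.2 hA'0) hA't).ne'
    have httop : ∀ k, tt k ≠ ⊤ := fun k =>
      ENNReal.rpow_ne_top_of_nonneg (by positivity) hA't
    have hsubset : ∀ k : ℕ,
        {ω | δ ≤ ‖prodOp ρ (n:ℤ) k ω (X ((n:ℤ) - k) ω - μ0)‖}
        ⊆ {ω | tt k ≤ ∏ i ∈ Finset.range k, ((‖ρ ((n:ℤ) - i) ω‖₊ : ℝ≥0∞)) ^ p}
          ∪ {ω | δ' / tt k ≤ ((‖X ((n:ℤ) - k) ω - μ0‖₊ : ℝ≥0∞)) ^ p} := by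
      intro k ω hω
      simp only [Set.mem_setOf_eq] at hω
      by_contra hcon
      simp only [Set.mem_union, Set.mem_setOf_eq, not_or, not_le] at hcon
      obtain ⟨h1, h2⟩ := hcon
      have hkey : δ' ≤ (∏ i ∈ Finset.range k, ((‖ρ ((n:ℤ) - i) ω‖₊ : ℝ≥0∞)) ^ p)
          * ((‖X ((n:ℤ) - k) ω - μ0‖₊ : ℝ≥0∞)) ^ p := by
        refine le_trans ?_ (nnnorm_prodOp_apply_le ρ hp0 k (n:ℤ) ω _)
        refine ENNReal.rpow_le_rpow ?_ hp0
        rw [← ofReal_norm_eq_coe_nnnorm]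
        exact ENNReal.ofReal_le_ofReal hω
      have hlt : (∏ i ∈ Finset.range k, ((‖ρ ((n:ℤ) - i) ω‖₊ : ℝ≥0∞)) ^ p)
          * ((‖X ((n:ℤ) - k) ω - μ0‖₊ : ℝ≥0∞)) ^ p < δ' := by
        calc (∏ i ∈ Finset.range k, ((‖ρ ((n:ℤ) - i) ω‖₊ : ℝ≥0∞)) ^ p)
            * ((‖X ((n:ℤ) - k) ω - μ0‖₊ : ℝ≥0∞)) ^ p
            ≤ tt k * ((‖X ((n:ℤ) - k) ω - μ0‖₊ : ℝ≥0∞)) ^ p :=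
              mul_le_mul_left h1.le _
          _ < tt k * (δ' / tt k) := ENNReal.mul_lt_mul_right (htt0 k) (httop k) h2
          _ ≤ δ' := ENNReal.mul_div_le
      exact absurd hkey (not_le.2 hlt)
    have hbound : ∀ k : ℕ,
        μ {ω | δ ≤ ‖prodOp ρ (n:ℤ) k ω (X ((n:ℤ) - k) ω - μ0)‖}
          ≤ (1 + C0 * δ'⁻¹) * tt k := by
      intro k
      refine le_trans (measure_mono (hsubset k)) (le_trans (measure_union_le _ _) ?_)
      have hPr : μ {ω | tt k ≤ ∏ i ∈ Finset.range k, ((‖ρ ((n:ℤ) - i) ω‖₊ : ℝ≥0∞)) ^ p}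
          ≤ tt k := by
        have hm : Measurable fun ω =>
            ∏ i ∈ Finset.range k, ((‖ρ ((n:ℤ) - i) ω‖₊ : ℝ≥0∞)) ^ p :=
          Finset.measurable_prod _ fun i _ =>
            (ENNReal.continuous_rpow_const.measurable.comp
              measurable_nnnorm.coe_nnreal_ennreal).comp (hρmeas _)
        refine le_trans (meas_ge_le_lintegral_div hm.aemeasurable (htt0 k) (httop k)) ?_
        rw [lintegral_prodG_range hρmeas hρiid p (n:ℤ) k]
        calc A ^ k / tt k ≤ A' ^ k / tt k :=
              ENNReal.div_le_div_right (pow_le_pow_left' (le_max_left _ _) k) _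
          _ = tt k := by
              rw [← ENNReal.rpow_natCast A' k,
                show ((k:ℕ):ℝ) = (k:ℝ)/2 + (k:ℝ)/2 by ring,
                ENNReal.rpow_add _ _ hA'0 hA't, mul_div_assoc,
                ENNReal.div_self (htt0 k) (httop k), mul_one]
      have hW : μ {ω | δ' / tt k ≤ ((‖X ((n:ℤ) - k) ω - μ0‖₊ : ℝ≥0∞)) ^ p}
          ≤ (C0 * δ'⁻¹) * tt k := by
        have hm : Measurable fun ω => ((‖X ((n:ℤ) - k) ω - μ0‖₊ : ℝ≥0∞)) ^ p :=
          hψmeas.comp (hXmeas _)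
        have hd0 : δ' / tt k ≠ 0 := ENNReal.div_ne_zero.2 ⟨hδ'0, httop k⟩
        have hdt : δ' / tt k ≠ ⊤ := by
          rw [div_eq_mul_inv]
          exact ENNReal.mul_ne_top hδ't (ENNReal.inv_ne_top.2 (htt0 k))
        refine le_trans (meas_ge_le_lintegral_div hm.aemeasurable hd0 hdt) ?_
        rw [hCconst ((n:ℤ) - k)]
        have hinv : (δ' / tt k)⁻¹ = tt k / δ' :=
          ENNReal.inv_div (Or.inl (httop k)) (Or.inl (htt0 k))
        refine le_of_eq ?_
        rw [div_eq_mul_inv, hinv, div_eq_mul_inv]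
        ring
      calc μ {ω | tt k ≤ ∏ i ∈ Finset.range k, ((‖ρ ((n:ℤ) - i) ω‖₊ : ℝ≥0∞)) ^ p}
            + μ {ω | δ' / tt k ≤ ((‖X ((n:ℤ) - k) ω - μ0‖₊ : ℝ≥0∞)) ^ p}
          ≤ tt k + (C0 * δ'⁻¹) * tt k := add_le_add hPr hW
        _ = (1 + C0 * δ'⁻¹) * tt k := by rw [add_mul, one_mul]
    have hc_ne_top : (1 + C0 * δ'⁻¹) ≠ ⊤ :=
      ENNReal.add_ne_top.2 ⟨ENNReal.one_ne_top,
        ENNReal.mul_ne_top hC0top (ENNReal.inv_ne_top.2 hδ'0)⟩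
    have htt_lim : Tendsto tt atTop (𝓝 0) := by
      have hr : A' ^ ((1:ℝ)/2) < 1 := ENNReal.rpow_lt_one hA'1 (by norm_num)
      have heq : tt = fun k : ℕ => (A' ^ ((1:ℝ)/2)) ^ k := by
        funext k
        rw [htt, ← ENNReal.rpow_natCast (A' ^ ((1:ℝ)/2)) k, ← ENNReal.rpow_mul]
        congr 1
        ring
      rw [heq]
      exact ENNReal.tendsto_pow_atTop_nhds_zero_of_lt_one hr
    have hfull := ENNReal.Tendsto.const_mul htt_lim (Or.inr hc_ne_top)
    rw [mul_zero] at hfull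
    exact tendsto_of_tendsto_of_tendsto_of_le_of_le tendsto_const_nhds hfull
      (fun k => zero_le) hbound
  -- key estimate for each n
  have key : ∀ n : ℕ, ∫⁻ ω, ((‖X (n:ℤ) ω - μ0 - ∑ j ∈ Finset.range n,
      prodOp ρ (n:ℤ) j ω (ε ((n:ℤ) - j) ω)‖₊ : ℝ≥0∞)) ^ p ∂μ ≤ D n := by
    intro n
    obtain ⟨ns, hns, hae⟩ := (hTmeasure n).exists_seq_tendsto_ae
    have hid : ∀ᵐ ω ∂μ, ∀ k : ℕ, n ≤ ns k →
        X (n:ℤ) ω - μ0 - ∑ j ∈ Finset.range n, prodOp ρ (n:ℤ) j ω (ε ((n:ℤ) - j) ω)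
          = (∑ j ∈ Finset.Ico n (ns k), prodOp ρ (n:ℤ) j ω (ε ((n:ℤ) - j) ω))
            + prodOp ρ (n:ℤ) (ns k) ω (X ((n:ℤ) - (ns k)) ω - μ0) := by
      rw [ae_all_iff]
      intro k
      by_cases hkn : n ≤ ns k
      · filter_upwards [iterate_sol hXsol (n:ℤ) (ns k)] with ω hω _
        rw [← Finset.sum_range_add_sum_Ico
          (fun j => prodOp ρ (n:ℤ) j ω (ε ((n:ℤ) - j) ω)) hkn] at hω
        rw [hω]
        abel
      · filter_upwards with ω hk
        exact absurd hk hkn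
    have hconv2 : ∀ᵐ ω ∂μ, Tendsto (fun k => ((‖∑ j ∈ Finset.Ico n (ns k),
        prodOp ρ (n:ℤ) j ω (ε ((n:ℤ) - j) ω)‖₊ : ℝ≥0∞)) ^ p) atTop
        (𝓝 (((‖X (n:ℤ) ω - μ0 - ∑ j ∈ Finset.range n,
          prodOp ρ (n:ℤ) j ω (ε ((n:ℤ) - j) ω)‖₊ : ℝ≥0∞)) ^ p)) := by
      filter_upwards [hid, hae] with ω h1 h2
      simp only [Pi.zero_apply] at h2
      have hBconv : Tendsto (fun k => ∑ j ∈ Finset.Ico n (ns k),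
          prodOp ρ (n:ℤ) j ω (ε ((n:ℤ) - j) ω)) atTop
          (𝓝 (X (n:ℤ) ω - μ0 - ∑ j ∈ Finset.range n,
            prodOp ρ (n:ℤ) j ω (ε ((n:ℤ) - j) ω))) := by
        have hev : ∀ᶠ k in atTop, (X (n:ℤ) ω - μ0 - ∑ j ∈ Finset.range n,
            prodOp ρ (n:ℤ) j ω (ε ((n:ℤ) - j) ω))
              - prodOp ρ (n:ℤ) (ns k) ω (X ((n:ℤ) - (ns k)) ω - μ0)
            = ∑ j ∈ Finset.Ico n (ns k), prodOp ρ (n:ℤ) j ω (ε ((n:ℤ) - j) ω) := by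
          filter_upwards [eventually_ge_atTop n] with k hk
          rw [h1 k (le_trans hk hns.le_apply)]
          abel
        have hsub : Tendsto (fun k => (X (n:ℤ) ω - μ0 - ∑ j ∈ Finset.range n,
            prodOp ρ (n:ℤ) j ω (ε ((n:ℤ) - j) ω))
              - prodOp ρ (n:ℤ) (ns k) ω (X ((n:ℤ) - (ns k)) ω - μ0)) atTop
            (𝓝 (X (n:ℤ) ω - μ0 - ∑ j ∈ Finset.range n,
              prodOp ρ (n:ℤ) j ω (ε ((n:ℤ) - j) ω))) := by
          have h3 : Tendsto (fun k : ℕ => (X (n:ℤ) ω - μ0 - ∑ j ∈ Finset.range n,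
              prodOp ρ (n:ℤ) j ω (ε ((n:ℤ) - j) ω))
                - prodOp ρ (n:ℤ) (ns k) ω (X ((n:ℤ) - (ns k)) ω - μ0)) atTop
              (𝓝 ((X (n:ℤ) ω - μ0 - ∑ j ∈ Finset.range n,
                prodOp ρ (n:ℤ) j ω (ε ((n:ℤ) - j) ω)) - 0)) :=
            Tendsto.sub tendsto_const_nhds h2
          rw [sub_zero] at h3
          exact h3
        exact hsub.congr' hev
      exact ((hφBc.tendsto _).comp hBconv)
    have hcongr : ∫⁻ ω, ((‖X (n:ℤ) ω - μ0 - ∑ j ∈ Finset.range n,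
        prodOp ρ (n:ℤ) j ω (ε ((n:ℤ) - j) ω)‖₊ : ℝ≥0∞)) ^ p ∂μ
        = ∫⁻ ω, liminf (fun k => ((‖∑ j ∈ Finset.Ico n (ns k),
            prodOp ρ (n:ℤ) j ω (ε ((n:ℤ) - j) ω)‖₊ : ℝ≥0∞)) ^ p) atTop ∂μ :=
      lintegral_congr_ae (hconv2.mono fun ω h => (h.liminf_eq).symm)
    rw [hcongr]
    refine le_trans (lintegral_liminf_le fun k =>
      hφB.comp (Finset.measurable_sum _ fun j _ => hterm_meas _ j)) ?_
    refine le_trans (liminf_le_liminf (Eventually.of_forall fun k => hPbound n (ns k))) ?_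
    simp [liminf_const]
  -- conclusion
  have hRmeas : ∀ n : ℕ, Measurable (fun ω => X (n:ℤ) ω - μ0 - ∑ j ∈ Finset.range n,
      prodOp ρ (n:ℤ) j ω (ε ((n:ℤ) - j) ω)) := fun n =>
    ((hXmeas _).sub measurable_const).sub
      (Finset.measurable_sum _ fun j _ => hterm_meas _ j)
  have hint : ∀ n : ℕ, ∫ ω, ‖X (n:ℤ) ω - μ0 - ∑ j ∈ Finset.range n,
      prodOp ρ (n:ℤ) j ω (ε ((n:ℤ) - j) ω)‖ ^ p ∂μ
      = (∫⁻ ω, ((‖X (n:ℤ) ω - μ0 - ∑ j ∈ Finset.range n,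
          prodOp ρ (n:ℤ) j ω (ε ((n:ℤ) - j) ω)‖₊ : ℝ≥0∞)) ^ p ∂μ).toReal := by
    intro n
    rw [integral_eq_lintegral_of_nonneg_ae
      (ae_of_all _ fun ω => Real.rpow_nonneg (norm_nonneg _) p)
      (((Real.continuous_rpow_const hp0).measurable.comp
        (hRmeas n).norm).aestronglyMeasurable)]
    congr 1
    exact lintegral_congr fun ω => hconv _
  have hDlim' : Tendsto (fun n => (D n).toReal) atTop (𝓝 0) := by
    have h := (ENNReal.tendsto_toReal (a := 0) (by simp)).comp hDlim
    simp only [ENNReal.toReal_zero] at h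
    exact h
  refine squeeze_zero (fun n => integral_nonneg fun ω => Real.rpow_nonneg (norm_nonneg _) p)
    (fun n => ?_) hDlim'
  rw [hint n]
  exact ENNReal.toReal_mono (hDtop n) (key n)
end
end
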